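/- Let n ≥ 1 and d ≥ 0 be natural numbers, and let α : Fin n → ℕ be an exponent vector with ∑_{j∈Fin n} α_j ≤ d. Let μ be the n-fold product of the standard Gaussian measure N(0,1) on ℝ. Then ∫ ∏_{j∈Fin n} |u_j|^(α_j) dμ(u) ≤ 2^(d/2) · ⌈d/2⌉!, where 2^(d/2) denotes the real power and ⌈d/2⌉! is the factorial of the ceiling of d/2. -/

import Mathlib

open MeasureTheory ProbabilityTheory

namespace Stmt9Aux

open Real ENNReal NNReal

lemma gamma_add_half_le (c : ℕ) :
    Real.Gamma ((c : ℝ) + 1 / 2) ≤ Real.sqrt π * (Nat.factorial c : ℝ) := by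
  induction c with
  | zero => rw [Nat.cast_zero, zero_add, Real.Gamma_one_half_eq, Nat.factorial_zero]; simp
  | succ c ih =>
    have h0 : ((c : ℝ) + 1 / 2) ≠ 0 := by positivity
    have he : ((c + 1 : ℕ) : ℝ) + 1 / 2 = ((c : ℝ) + 1 / 2) + 1 := by push_cast; ring
    rw [he, Real.Gamma_add_one h0]
    have hpos : 0 ≤ Real.Gamma ((c : ℝ) + 1 / 2) :=
      (Real.Gamma_pos_of_pos (by positivity)).le
    calc ((c : ℝ) + 1 / 2) * Real.Gamma ((c : ℝ) + 1 / 2)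
        ≤ ((c : ℝ) + 1) * (Real.sqrt π * (Nat.factorial c : ℝ)) :=
          mul_le_mul (by linarith) ih hpos (by positivity)
      _ = Real.sqrt π * ((Nat.factorial (c + 1) : ℝ)) := by
          rw [Nat.factorial_succ]; push_cast; ring

lemma gauss_int (g : ℝ → ℝ) :
    ∫ x, g x ∂(gaussianReal 0 1) = ∫ x, gaussianPDFReal 0 1 x * g x := by
  rw [gaussianReal_of_var_ne_zero _ one_ne_zero]
  have hmeas : Measurable fun x => (gaussianPDFReal 0 1 x).toNNReal :=
    (measurable_gaussianPDFReal 0 1).real_toNNReal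
  have hpdf : gaussianPDF 0 1 = fun x => ((gaussianPDFReal 0 1 x).toNNReal : ℝ≥0∞) := by
    funext x; rw [gaussianPDF]; rfl
  rw [hpdf, integral_withDensity_eq_integral_smul hmeas]
  congr 1; funext x
  simp [NNReal.smul_def, Real.coe_toNNReal _ (gaussianPDFReal_nonneg 0 1 x)]

lemma pdf_eq (x : ℝ) : gaussianPDFReal 0 1 x = (√(2 * π))⁻¹ * rexp (-(1/2) * x ^ 2) := by
  rw [gaussianPDFReal]
  norm_num
  left
  ring_nf

lemma moment_eq (k : ℕ) :
    ∫ x, |x| ^ k ∂(gaussianReal 0 1)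
      = 2 ^ ((k : ℝ) / 2) * Real.Gamma (((k : ℝ) + 1) / 2) / Real.sqrt π := by
  rw [gauss_int]
  have h1 : ∫ x : ℝ, gaussianPDFReal 0 1 x * |x| ^ k
      = (√(2 * π))⁻¹ * ∫ x : ℝ, |x| ^ k * rexp (-(1/2) * x ^ 2) := by
    rw [← integral_const_mul]
    congr 1; funext x; rw [pdf_eq]; ring
  rw [h1]
  have h2 : (∫ x : ℝ, |x| ^ k * rexp (-(1/2) * x ^ 2))
      = 2 * ∫ x in Set.Ioi (0:ℝ), x ^ (k : ℝ) * rexp (-(1/2) * x ^ (2 : ℝ)) := by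
    calc ∫ x : ℝ, |x| ^ k * rexp (-(1/2) * x ^ 2)
        = ∫ x : ℝ, (fun t => t ^ k * rexp (-(1/2) * t ^ 2)) |x| := by
          congr 1; funext x; simp [sq_abs]
      _ = 2 * ∫ t in Set.Ioi (0:ℝ), t ^ k * rexp (-(1/2) * t ^ 2) :=
          integral_comp_abs (f := fun t => t ^ k * rexp (-(1/2) * t ^ 2))
      _ = 2 * ∫ x in Set.Ioi (0:ℝ), x ^ (k : ℝ) * rexp (-(1/2) * x ^ (2 : ℝ)) := by
          simp_rw [Real.rpow_natCast, Real.rpow_two]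
  rw [h2, integral_rpow_mul_exp_neg_mul_rpow two_pos
    (by linarith [Nat.cast_nonneg (α := ℝ) k] : (-1:ℝ) < (k:ℝ)) one_half_pos]
  have hG := Real.Gamma_pos_of_pos (show (0:ℝ) < ((k:ℝ)+1)/2 by positivity)
  have hs2 : Real.sqrt 2 * Real.sqrt 2 = 2 := Real.mul_self_sqrt two_pos.le
  have hsplit : Real.sqrt (2 * π) = Real.sqrt 2 * Real.sqrt π := Real.sqrt_mul two_pos.le π
  have hrp : ((1:ℝ)/2) ^ (-((k:ℝ) + 1) / 2) = 2 ^ (((k:ℝ) + 1) / 2) := by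
    rw [one_div, Real.inv_rpow two_pos.le, ← Real.rpow_neg two_pos.le]
    congr 1; ring
  have hadd : (2:ℝ) ^ (((k:ℝ) + 1) / 2) = 2 ^ ((k:ℝ) / 2) * Real.sqrt 2 := by
    rw [Real.sqrt_eq_rpow, ← Real.rpow_add two_pos]
    ring_nf
  rw [hrp, hadd, hsplit]
  have hsπ : Real.sqrt π > 0 := Real.sqrt_pos.mpr Real.pi_pos
  have h2p : Real.sqrt 2 > 0 := Real.sqrt_pos.mpr two_pos
  field_simp

lemma one_le_sqrt_pi : (1 : ℝ) ≤ Real.sqrt π := by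
  rw [show (1:ℝ) = Real.sqrt 1 by simp]
  exact Real.sqrt_le_sqrt (by linarith [Real.pi_gt_three])

lemma moment_le (k : ℕ) :
    ∫ x, |x| ^ k ∂(gaussianReal 0 1)
      ≤ 2 ^ ((k : ℝ) / 2) * (Nat.factorial ⌈(k : ℝ) / 2⌉₊ : ℝ) := by
  rw [moment_eq]
  have hsπ : (0:ℝ) < Real.sqrt π := Real.sqrt_pos.mpr Real.pi_pos
  have key : Real.Gamma (((k : ℝ) + 1) / 2)
      ≤ Real.sqrt π * (Nat.factorial ⌈(k : ℝ) / 2⌉₊ : ℝ) := by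
    rcases Nat.even_or_odd k with ⟨c, hc⟩ | ⟨c, hc⟩
    · subst hc
      have h1 : ((c + c : ℕ) : ℝ) / 2 = (c : ℝ) := by push_cast; ring
      have h2 : (((c + c : ℕ) : ℝ) + 1) / 2 = (c : ℝ) + 1 / 2 := by push_cast; ring
      rw [h1, h2, Nat.ceil_natCast]
      exact gamma_add_half_le c
    · subst hc
      have h2 : (((2 * c + 1 : ℕ) : ℝ) + 1) / 2 = (c : ℝ) + 1 := by push_cast; ring
      have h1 : ⌈((2 * c + 1 : ℕ) : ℝ) / 2⌉₊ = c + 1 := by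
        rw [Nat.ceil_eq_iff (Nat.succ_ne_zero c)]
        constructor
        · push_cast; linarith
        · push_cast; linarith
      rw [h1, h2, Real.Gamma_nat_eq_factorial]
      have hf : (Nat.factorial c : ℝ) ≤ (Nat.factorial (c + 1) : ℝ) := by
        exact_mod_cast Nat.factorial_le (Nat.le_succ c)
      nlinarith [one_le_sqrt_pi, (Nat.cast_pos (α := ℝ)).mpr (Nat.factorial_pos c)]
  calc 2 ^ ((k:ℝ)/2) * Real.Gamma (((k:ℝ)+1)/2) / Real.sqrt π
      ≤ 2 ^ ((k:ℝ)/2) * (Real.sqrt π * (Nat.factorial ⌈(k:ℝ)/2⌉₊ : ℝ)) / Real.sqrt π := by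
        gcongr
    _ = 2 ^ ((k:ℝ)/2) * (Nat.factorial ⌈(k:ℝ)/2⌉₊ : ℝ) := by
        field_simp

lemma integrable_abs_pow (k : ℕ) :
    Integrable (fun x : ℝ => |x| ^ k) (gaussianReal 0 1) := by
  rw [gaussianReal_of_var_ne_zero _ one_ne_zero]
  have hmeas : Measurable fun x => (gaussianPDFReal 0 1 x).toNNReal :=
    (measurable_gaussianPDFReal 0 1).real_toNNReal
  have hpdf : gaussianPDF 0 1 = fun x => ((gaussianPDFReal 0 1 x).toNNReal : ℝ≥0∞) := by
    funext x; rw [gaussianPDF]; rfl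
  rw [hpdf]
  apply (integrable_withDensity_iff_integrable_smul hmeas).mpr
  have base : Integrable (fun x : ℝ => |x| ^ k * rexp (-(1/2) * x ^ 2)) := by
    have h := (integrable_rpow_mul_exp_neg_mul_sq one_half_pos
      (by linarith [Nat.cast_nonneg (α := ℝ) k] : (-1:ℝ) < (k:ℝ))).abs
    refine h.congr (ae_of_all _ fun x => ?_)
    simp only [Real.rpow_natCast, abs_mul, abs_pow, Real.abs_exp]
  refine (base.const_mul ((√(2 * π))⁻¹)).congr (ae_of_all _ fun x => ?_)
  show (√(2 * π))⁻¹ * (|x| ^ k * rexp (-(1/2) * x ^ 2))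
      = (gaussianPDFReal 0 1 x).toNNReal • |x| ^ k
  rw [NNReal.smul_def, Real.coe_toNNReal _ (gaussianPDFReal_nonneg 0 1 x), pdf_eq, smul_eq_mul]
  ring

lemma pi_map_eval (n : ℕ) (j : Fin n) :
    (Measure.pi fun _ : Fin n => gaussianReal 0 1).map (fun u => u j) = gaussianReal 0 1 := by
  ext s hs
  rw [Measure.map_apply (measurable_pi_apply j) hs]
  have hpre : (fun u : Fin n → ℝ => u j) ⁻¹' s
      = Set.pi Set.univ (Function.update (fun _ : Fin n => (Set.univ : Set ℝ)) j s) := by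
    ext u
    simp only [Set.mem_preimage, Set.mem_pi, Set.mem_univ, true_implies]
    constructor
    · intro h i
      rcases eq_or_ne i j with rfl | hij
      · simpa [Function.update_self] using h
      · simp [Function.update_of_ne hij]
    · intro h
      simpa [Function.update_self] using h j
  rw [hpre, Measure.pi_pi]
  calc ∏ i : Fin n, gaussianReal 0 1 (Function.update (fun _ : Fin n => (Set.univ : Set ℝ)) j s i)
      = ∏ i : Fin n, (if i = j then gaussianReal 0 1 s else 1) := by
        refine Finset.prod_congr rfl fun i _ => ?_
        rcases eq_or_ne i j with rfl | hij
        · simp [Function.update_self]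
        · simp [Function.update_of_ne hij, hij]
    _ = gaussianReal 0 1 s := by simp

lemma rhs_mono {s d : ℕ} (h : s ≤ d) :
    (2:ℝ) ^ ((s:ℝ)/2) * (Nat.factorial ⌈(s:ℝ)/2⌉₊ : ℝ)
      ≤ (2:ℝ) ^ ((d:ℝ)/2) * (Nat.factorial ⌈(d:ℝ)/2⌉₊ : ℝ) := by
  have hsd : (s:ℝ)/2 ≤ (d:ℝ)/2 := by
    have : (s:ℝ) ≤ d := Nat.cast_le.mpr h
    linarith
  refine mul_le_mul (Real.rpow_le_rpow_of_exponent_le one_le_two hsd) ?_ (by positivity) ?_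
  · exact_mod_cast Nat.factorial_le (Nat.ceil_le_ceil hsd)
  · exact Real.rpow_nonneg two_pos.le _

end Stmt9Aux

open Stmt9Aux Real in
/-- for an exponent vector `α` of total degree at most `d`, the expected
absolute value of the monomial `∏_j |u_j|^(α_j)` under the standard Gaussian product
measure is at most `2^(d/2) · ⌈d/2⌉!`. -/
theorem stmt_9 (n d : ℕ) (hn : 1 ≤ n) (α : Fin n → ℕ) (hdeg : ∑ j, α j ≤ d) :
    ∫ u : Fin n → ℝ, (∏ j, |u j| ^ α j)
        ∂(Measure.pi fun _ : Fin n => gaussianReal 0 1) ≤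
      (2 : ℝ) ^ ((d : ℝ) / 2) * (Nat.factorial ⌈(d : ℝ) / 2⌉₊ : ℝ) := by
  set μn := Measure.pi fun _ : Fin n => gaussianReal 0 1 with hμn
  have hprob : IsProbabilityMeasure μn := by infer_instance
  have hRHS1 : (1:ℝ) ≤ (2 : ℝ) ^ ((d : ℝ) / 2) * (Nat.factorial ⌈(d : ℝ) / 2⌉₊ : ℝ) := by
    have h1 : (1:ℝ) ≤ (2:ℝ) ^ ((d:ℝ)/2) := by
      calc (1:ℝ) = (2:ℝ) ^ (0:ℝ) := by simp
        _ ≤ (2:ℝ) ^ ((d:ℝ)/2) :=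
          Real.rpow_le_rpow_of_exponent_le one_le_two (by positivity)
    have h2 : (1:ℝ) ≤ (Nat.factorial ⌈(d : ℝ) / 2⌉₊ : ℝ) := by
      exact_mod_cast Nat.one_le_iff_ne_zero.mpr (Nat.factorial_ne_zero _)
    nlinarith
  rcases Nat.eq_zero_or_pos (∑ j, α j) with hz | hpos
  · have hall : ∀ j : Fin n, α j = 0 := fun j =>
      (Finset.sum_eq_zero_iff.mp hz) j (Finset.mem_univ j)
    have : ∀ u : Fin n → ℝ, (∏ j, |u j| ^ α j) = 1 := fun u => by
      simp [hall]
    simp only [this]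
    rw [integral_const, probReal_univ]
    simpa using hRHS1
  · set S := ∑ j, α j with hS
    have hS0 : (S:ℝ) ≠ 0 := by positivity
    have hm : Measurable fun x : ℝ => |x| ^ S := measurable_abs.pow_const S
    have hintj : ∀ j : Fin n, Integrable (fun u : Fin n → ℝ => |u j| ^ S) μn := by
      intro j
      have hmap := pi_map_eval n j
      have hasm : AEStronglyMeasurable (fun x : ℝ => |x| ^ S) (μn.map fun u => u j) := by
        rw [hmap]; exact hm.aestronglyMeasurable
      have h := integrable_map_measure hasm (measurable_pi_apply j).aemeasurable
      rw [hmap] at h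
      exact h.mp (integrable_abs_pow S)
    have hIj : ∀ j : Fin n, ∫ u, |u j| ^ S ∂μn = ∫ x, |x| ^ S ∂(gaussianReal 0 1) := by
      intro j
      have hmap := pi_map_eval n j
      have hasm : AEStronglyMeasurable (fun x : ℝ => |x| ^ S) (μn.map fun u => u j) := by
        rw [hmap]; exact hm.aestronglyMeasurable
      rw [← hmap, integral_map (measurable_pi_apply j).aemeasurable hasm]
    have hw' : ∑ j : Fin n, ((α j : ℝ) / S) = 1 := by
      rw [← Finset.sum_div, div_eq_one_iff_eq hS0, hS]
      push_cast
      rfl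
    have hpt : ∀ u : Fin n → ℝ,
        (∏ j, |u j| ^ α j) ≤ ∑ j, ((α j : ℝ) / S) * |u j| ^ S := by
      intro u
      have key := Real.geom_mean_le_arith_mean_weighted Finset.univ
        (fun j => (α j : ℝ) / S) (fun j => |u j| ^ S)
        (fun j _ => by positivity) hw' (fun j _ => by positivity)
      calc (∏ j, |u j| ^ α j) = ∏ j, (|u j| ^ S) ^ ((α j : ℝ) / S) := by
            refine Finset.prod_congr rfl fun j _ => ?_
            rw [← Real.rpow_natCast |u j| S, ← Real.rpow_mul (abs_nonneg _),
              ← Real.rpow_natCast |u j| (α j)]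
            congr 1
            field_simp
        _ ≤ ∑ j, ((α j : ℝ) / S) * |u j| ^ S := key
    have hint_sum : Integrable (fun u : Fin n → ℝ => ∑ j, ((α j : ℝ) / S) * |u j| ^ S) μn :=
      integrable_finset_sum _ fun j _ => (hintj j).const_mul _
    have hnn : 0 ≤ᵐ[μn] fun u : Fin n → ℝ => ∏ j, |u j| ^ α j :=
      ae_of_all _ fun u => Finset.prod_nonneg fun j _ => by positivity
    have step1 := integral_mono_of_nonneg hnn hint_sum (ae_of_all _ hpt)
    calc ∫ u : Fin n → ℝ, ∏ j, |u j| ^ α j ∂μn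
        ≤ ∫ u : Fin n → ℝ, ∑ j, ((α j : ℝ) / S) * |u j| ^ S ∂μn := step1
      _ = ∑ j : Fin n, ((α j : ℝ) / S) * ∫ u, |u j| ^ S ∂μn := by
          rw [integral_finset_sum _ fun j _ => (hintj j).const_mul _]
          exact Finset.sum_congr rfl fun j _ => integral_const_mul _ _
      _ = ∑ j : Fin n, ((α j : ℝ) / S) * ∫ x, |x| ^ S ∂(gaussianReal 0 1) := by
          exact Finset.sum_congr rfl fun j _ => by rw [hIj j]
      _ = ∫ x, |x| ^ S ∂(gaussianReal 0 1) := by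
          rw [← Finset.sum_mul, hw', one_mul]
      _ ≤ 2 ^ ((S : ℝ) / 2) * (Nat.factorial ⌈(S : ℝ) / 2⌉₊ : ℝ) := moment_le S
      _ ≤ (2 : ℝ) ^ ((d : ℝ) / 2) * (Nat.factorial ⌈(d : ℝ) / 2⌉₊ : ℝ) := rhs_mono hdeg
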